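/- Let π be in NCL(n). Then the cycled unlinking π° is a partition in NC(n), and π° ≪ π̂. -/

import Mathlib

open scoped Classical

/-- The minimum of a finset of naturals (`0` if empty). -/
noncomputable def fmin (A : Finset ℕ) : ℕ := sInf (A : Set ℕ)

/-- The maximum of a finset of naturals (`0` if empty). -/
noncomputable def fmax (A : Finset ℕ) : ℕ := sSup (A : Set ℕ)

/-- `α` is a partition of the finite set `F ⊆ ℕ`. -/
def IsPartitionOfSet (F : Finset ℕ) (α : Finset (Finset ℕ)) : Prop :=
  (∀ V ∈ α, V.Nonempty) ∧ (∀ V ∈ α, V ⊆ F) ∧ (∀ m ∈ F, ∃ V ∈ α, m ∈ V) ∧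
    ∀ V ∈ α, ∀ W ∈ α, V ≠ W → V ∩ W = ∅

/-- `α` is a partition of `{1,…,n}`. -/
def IsPartitionOf (n : ℕ) (α : Finset (Finset ℕ)) : Prop :=
  IsPartitionOfSet (Finset.Icc 1 n) α

/-- Two distinct blocks of the family `π` cross: there are `a < b < c < d` with
`a, c` in one block and `b, d` in a different block. -/
def IsCrossing (π : Finset (Finset ℕ)) : Prop :=
  ∃ A ∈ π, ∃ B ∈ π, A ≠ B ∧
    ∃ a ∈ A, ∃ b ∈ B, ∃ c ∈ A, ∃ d ∈ B, a < b ∧ b < c ∧ c < d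

/-- `α ∈ NC(n)`: a non-crossing partition of `{1,…,n}`. -/
def IsNCPartition (n : ℕ) (α : Finset (Finset ℕ)) : Prop :=
  IsPartitionOf n α ∧ ¬ IsCrossing α

/-- Reverse refinement order `α ≤ β`: every block of `α` is contained in a block of `β`
(equivalently, every block of `β` is a union of blocks of `α`). -/
def Refines (α β : Finset (Finset ℕ)) : Prop := ∀ V ∈ α, ∃ W ∈ β, V ⊆ W

/-- The partial order `α ≪ β`: `α ≤ β` and for every block `W` of `β` there is a block
`V` of `α` containing both `min W` and `max W`. -/
def LL (α β : Finset (Finset ℕ)) : Prop :=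
  Refines α β ∧ ∀ W ∈ β, ∃ V ∈ α, fmin W ∈ V ∧ fmax W ∈ V

/-- A block `V` (of `α`) is `β`-special: some block `W` of `β` has the same min and max. -/
def SpecialBlock (β : Finset (Finset ℕ)) (V : Finset ℕ) : Prop :=
  ∃ W ∈ β, fmin V = fmin W ∧ fmax V = fmax W

/-- `V` is an outer block of `α`: no block of `α` strictly nests around it. -/
def OuterBlock (α : Finset (Finset ℕ)) (V : Finset ℕ) : Prop :=
  ∀ V' ∈ α, ¬ (fmin V' < fmin V ∧ fmax V < fmax V')

/-- `π` is a linked partition of the finite set `F ⊆ ℕ`. -/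
def IsLinkedPartitionOfSet (F : Finset ℕ) (π : Finset (Finset ℕ)) : Prop :=
  (∀ A ∈ π, A.Nonempty) ∧ (∀ A ∈ π, A ⊆ F) ∧ (∀ m ∈ F, ∃ A ∈ π, m ∈ A) ∧
    ∀ A ∈ π, ∀ B ∈ π, A ≠ B →
      A ∩ B = ∅ ∨
        (2 ≤ A.card ∧ 2 ≤ B.card ∧ (A ∩ B).card = 1 ∧ fmin A ≠ fmin B ∧
          ∀ x ∈ A ∩ B, x = fmin A ∨ x = fmin B)

/-- `π ∈ NCL(F)`: a non-crossing linked partition of the finite set `F`. -/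
def IsNCLOfSet (F : Finset ℕ) (π : Finset (Finset ℕ)) : Prop :=
  IsLinkedPartitionOfSet F π ∧ ¬ IsCrossing π

/-- `π ∈ NCL(n)`: a non-crossing linked partition of `{1,…,n}`. -/
def IsNCL (n : ℕ) (π : Finset (Finset ℕ)) : Prop :=
  IsNCLOfSet (Finset.Icc 1 n) π

/-- The number of blocks of `π` containing `m`. -/
noncomputable def coverCount (π : Finset (Finset ℕ)) (m : ℕ) : ℕ :=
  (π.filter fun A => m ∈ A).card

/-- `m` is singly-covered by `π`: it lies in exactly one block. -/
def SinglyCovered (π : Finset (Finset ℕ)) (m : ℕ) : Prop := coverCount π m = 1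

/-- `m` is doubly-covered by `π`: it lies in exactly two blocks. -/
def DoublyCovered (π : Finset (Finset ℕ)) (m : ℕ) : Prop := coverCount π m = 2

/-- The partition `π̂` generated by the blocks of `π`: its blocks are the connected
components of the ground set under the relation of lying in a common block of `π`. -/
noncomputable def genPart (π : Finset (Finset ℕ)) : Finset (Finset ℕ) :=
  (π.sup id).image fun m =>
    (π.sup id).filter fun x =>
      Relation.EqvGen (fun a b => ∃ A ∈ π, a ∈ A ∧ b ∈ A) m x

/-- The unlinking `π̌` of a linked partition `π`. -/
noncomputable def unlink (π : Finset (Finset ℕ)) : Finset (Finset ℕ) :=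
  π.image fun A => if SinglyCovered π (fmin A) then A else A.erase (fmin A)

/-- The block of `α` containing `m` (empty if there is none). -/
noncomputable def blockOf (α : Finset (Finset ℕ)) (m : ℕ) : Finset ℕ :=
  (α.filter fun V => m ∈ V).sup id

/-- The successor of `m` in the cycle on the block `V` (elements in increasing order). -/
noncomputable def nextInBlock (V : Finset ℕ) (m : ℕ) : ℕ :=
  if m = fmax V then fmin V else fmin (V.filter fun x => m < x)

/-- The predecessor of `m` in the cycle on the block `V`. -/
noncomputable def prevInBlock (V : Finset ℕ) (m : ℕ) : ℕ :=
  if m = fmin V then fmax V else fmax (V.filter fun x => x < m)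

/-- The permutation `P_α` associated to a partition `α`, as a function: each block
`{i₁ < i₂ < ⋯ < iₘ}` becomes the cycle `i₁ ↦ i₂ ↦ ⋯ ↦ iₘ ↦ i₁`. -/
noncomputable def permOf (α : Finset (Finset ℕ)) (m : ℕ) : ℕ :=
  if m ∈ blockOf α m then nextInBlock (blockOf α m) m else m

/-- The inverse permutation `P_α⁻¹`, as a function. -/
noncomputable def permOfInv (α : Finset (Finset ℕ)) (m : ℕ) : ℕ :=
  if m ∈ blockOf α m then prevInBlock (blockOf α m) m else m

/-- The action `τ·α` of a map `τ` on a partition `α = {V₁,…,V_p}`, giving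
`{τ(V₁),…,τ(V_p)}`. -/
def mapPart (τ : ℕ → ℕ) (α : Finset (Finset ℕ)) : Finset (Finset ℕ) :=
  α.image fun V => V.image τ

/-- The cycled unlinking `π° := P_{π̂}⁻¹ · π̌`. -/
noncomputable def cycUnlink (π : Finset (Finset ℕ)) : Finset (Finset ℕ) :=
  mapPart (permOfInv (genPart π)) (unlink π)

/-- `NC(n)` as a finset. -/
noncomputable def NCF (n : ℕ) : Finset (Finset (Finset ℕ)) :=
  ((Finset.Icc 1 n).powerset.powerset).filter (IsNCPartition n)

/-- `NCL(n)` as a finset. -/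
noncomputable def NCLF (n : ℕ) : Finset (Finset (Finset ℕ)) :=
  ((Finset.Icc 1 n).powerset.powerset).filter (IsNCL n)

/-- The restriction `π|_E`: the blocks of `π` contained in `E`. -/
def restrictL (π : Finset (Finset ℕ)) (E : Finset ℕ) : Finset (Finset ℕ) :=
  π.filter fun A => A ⊆ E

/-- The partition `β₀` obtained from `β` by leaving blocks of size `≤ 2` intact and
breaking each block `W` with `|W| ≥ 3` into the doubleton `{min W, max W}` together
with `|W| - 2` singletons. -/
noncomputable def breakBlocks (β : Finset (Finset ℕ)) : Finset (Finset ℕ) :=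
  β.biUnion fun W =>
    if W.card ≤ 2 then {W}
    else insert {fmin W, fmax W} ((W \ {fmin W, fmax W}).image fun x => ({x} : Finset ℕ))


lemma fmin_mem {A : Finset ℕ} (h : A.Nonempty) : fmin A ∈ A := by
  have := Nat.sInf_mem (s := (A : Set ℕ)) (by exact_mod_cast h)
  exact_mod_cast this

lemma fmin_le {A : Finset ℕ} {a : ℕ} (h : a ∈ A) : fmin A ≤ a :=
  Nat.sInf_le (by exact_mod_cast h)

lemma fmax_mem {A : Finset ℕ} (h : A.Nonempty) : fmax A ∈ A := by
  have := Nat.sSup_mem (s := (A : Set ℕ)) (by exact_mod_cast h) A.finite_toSet.bddAbove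
  exact_mod_cast this

lemma le_fmax {A : Finset ℕ} {a : ℕ} (h : a ∈ A) : a ≤ fmax A :=
  le_csSup A.finite_toSet.bddAbove (by exact_mod_cast h)

lemma fmax_le {A : Finset ℕ} {b : ℕ} (h : A.Nonempty) (h2 : ∀ x ∈ A, x ≤ b) :
    fmax A ≤ b :=
  csSup_le (by exact_mod_cast h) (by intro x hx; exact h2 x (by exact_mod_cast hx))

lemma fmin_lt_fmax {A : Finset ℕ} (h : 2 ≤ A.card) : fmin A < fmax A := by
  obtain ⟨a, ha, b, hb, hab⟩ := Finset.one_lt_card.mp (show 1 < A.card by omega)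
  have h1 := fmin_le ha; have h2 := fmin_le hb
  have h3 := le_fmax ha; have h4 := le_fmax hb
  omega

/-- next spec when `m ≠ fmax`. -/
lemma next_spec {V : Finset ℕ} {m : ℕ} (hm : m ∈ V) (hne : m ≠ fmax V) :
    nextInBlock V m ∈ V ∧ m < nextInBlock V m ∧ ∀ y ∈ V, m < y → nextInBlock V m ≤ y := by
  have hmax : fmax V ∈ V.filter (fun x => m < x) := by
    refine Finset.mem_filter.mpr ⟨fmax_mem ⟨m, hm⟩, lt_of_le_of_ne (le_fmax hm) hne⟩
  have hne' : (V.filter (fun x => m < x)).Nonempty := ⟨_, hmax⟩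
  have hmem := fmin_mem hne'
  rw [Finset.mem_filter] at hmem
  unfold nextInBlock
  rw [if_neg hne]
  refine ⟨hmem.1, hmem.2, fun y hy hmy => fmin_le (Finset.mem_filter.mpr ⟨hy, hmy⟩)⟩

lemma next_fmax {V : Finset ℕ} : nextInBlock V (fmax V) = fmin V := if_pos rfl

lemma prev_fmin {V : Finset ℕ} : prevInBlock V (fmin V) = fmax V := if_pos rfl

lemma prev_spec {V : Finset ℕ} {m : ℕ} (hm : m ∈ V) (hne : m ≠ fmin V) :
    prevInBlock V m ∈ V ∧ prevInBlock V m < m ∧ ∀ y ∈ V, y < m → y ≤ prevInBlock V m := by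
  have hmin : fmin V ∈ V.filter (fun x => x < m) := by
    refine Finset.mem_filter.mpr ⟨fmin_mem ⟨m, hm⟩, lt_of_le_of_ne (fmin_le hm) (Ne.symm hne)⟩
  have hne' : (V.filter (fun x => x < m)).Nonempty := ⟨_, hmin⟩
  have hmem := fmax_mem hne'
  rw [Finset.mem_filter] at hmem
  unfold prevInBlock
  rw [if_neg hne]
  exact ⟨hmem.1, hmem.2, fun y hy hmy => le_fmax (Finset.mem_filter.mpr ⟨hy, hmy⟩)⟩

lemma next_mem {V : Finset ℕ} {m : ℕ} (hm : m ∈ V) : nextInBlock V m ∈ V := by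
  by_cases h : m = fmax V
  · rw [h, next_fmax]; exact fmin_mem ⟨m, hm⟩
  · exact (next_spec hm h).1

lemma prev_mem {V : Finset ℕ} {m : ℕ} (hm : m ∈ V) : prevInBlock V m ∈ V := by
  by_cases h : m = fmin V
  · rw [h, prev_fmin]; exact fmax_mem ⟨m, hm⟩
  · exact (prev_spec hm h).1

lemma prev_next {V : Finset ℕ} {m : ℕ} (hm : m ∈ V) :
    prevInBlock V (nextInBlock V m) = m := by
  by_cases h : m = fmax V
  · subst h; rw [next_fmax, prev_fmin]
  · obtain ⟨h1, h2, h3⟩ := next_spec hm h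
    have hne : nextInBlock V m ≠ fmin V := by
      have := fmin_le hm; omega
    unfold prevInBlock
    rw [if_neg hne]
    have hmf : m ∈ V.filter (fun x => x < nextInBlock V m) := Finset.mem_filter.mpr ⟨hm, h2⟩
    refine le_antisymm (fmax_le ⟨m, hmf⟩ ?_) (le_fmax hmf)
    intro x hx
    rw [Finset.mem_filter] at hx
    by_contra hc
    have := h3 x hx.1 (by omega)
    omega

lemma next_prev {V : Finset ℕ} {m : ℕ} (hm : m ∈ V) :
    nextInBlock V (prevInBlock V m) = m := by
  by_cases h : m = fmin V
  · subst h; rw [prev_fmin, next_fmax]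
  · obtain ⟨h1, h2, h3⟩ := prev_spec hm h
    have hne : prevInBlock V m ≠ fmax V := by
      have := le_fmax hm; omega
    unfold nextInBlock
    rw [if_neg hne]
    have hmf : m ∈ V.filter (fun x => prevInBlock V m < x) := Finset.mem_filter.mpr ⟨hm, h2⟩
    refine le_antisymm (fmin_le hmf) ?_
    by_contra hc
    push_neg at hc
    have hmem := fmin_mem ⟨m, hmf⟩
    rw [Finset.mem_filter] at hmem
    have := h3 _ hmem.1 hc
    omega

/-- blockOf a partition. -/
lemma blockOf_eq {F : Finset ℕ} {α : Finset (Finset ℕ)} (hpart : IsPartitionOfSet F α)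
    {V : Finset ℕ} {m : ℕ} (hV : V ∈ α) (hm : m ∈ V) : blockOf α m = V := by
  have hfil : α.filter (fun W => m ∈ W) = {V} := by
    ext W
    simp only [Finset.mem_filter, Finset.mem_singleton]
    constructor
    · rintro ⟨hW, hmW⟩
      by_contra hne
      have := hpart.2.2.2 W hW V hV hne
      have : m ∈ W ∩ V := Finset.mem_inter.mpr ⟨hmW, hm⟩
      rw [hpart.2.2.2 W hW V hV hne] at this
      exact absurd this (Finset.notMem_empty m)
    · rintro rfl; exact ⟨hV, hm⟩
  rw [blockOf, hfil, Finset.sup_singleton]; rfl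


/-- the linking relation -/
def LRel (π : Finset (Finset ℕ)) (a b : ℕ) : Prop := ∃ A ∈ π, a ∈ A ∧ b ∈ A

lemma lrel_symm {π : Finset (Finset ℕ)} : Symmetric (LRel π) := by
  rintro a b ⟨A, hA, h1, h2⟩; exact ⟨A, hA, h2, h1⟩

lemma eqvGen_to_rtg {π : Finset (Finset ℕ)} {a b : ℕ}
    (h : Relation.EqvGen (LRel π) a b) : Relation.ReflTransGen (LRel π) a b := by
  induction h with
  | rel _ _ h => exact Relation.ReflTransGen.single h
  | refl => exact Relation.ReflTransGen.refl
  | symm x y _ ih => exact (haveI : Std.Symm (LRel π) := ⟨fun a b h => lrel_symm h⟩; (Relation.ReflTransGen.symmetric (r := LRel π)).symm _ _ ih)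
  | trans x y z _ _ ih1 ih2 => exact ih1.trans ih2

lemma rtg_to_eqvGen {π : Finset (Finset ℕ)} {a b : ℕ}
    (h : Relation.ReflTransGen (LRel π) a b) : Relation.EqvGen (LRel π) a b := by
  induction h with
  | refl => exact Relation.EqvGen.refl a
  | tail _ h2 ih => exact ih.trans _ _ _ (Relation.EqvGen.rel _ _ h2)

/-- the class of m -/
noncomputable def classFn (π : Finset (Finset ℕ)) (m : ℕ) : Finset ℕ :=
  (π.sup id).filter fun x => Relation.EqvGen (fun a b => ∃ A ∈ π, a ∈ A ∧ b ∈ A) m x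

lemma genPart_def (π : Finset (Finset ℕ)) :
    genPart π = (π.sup id).image (classFn π) := rfl

lemma mem_ground {π : Finset (Finset ℕ)} {m : ℕ} :
    m ∈ π.sup id ↔ ∃ A ∈ π, m ∈ A := by
  simp [Finset.mem_sup]

lemma mem_classFn {π : Finset (Finset ℕ)} {m x : ℕ} :
    x ∈ classFn π m ↔ x ∈ π.sup id ∧ Relation.EqvGen (LRel π) m x := by
  unfold classFn LRel
  simp [Finset.mem_filter]

lemma eqv_mem_ground {π : Finset (Finset ℕ)} {m x : ℕ} (hm : m ∈ π.sup id)
    (h : Relation.EqvGen (LRel π) m x) : x ∈ π.sup id := by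
  have h' := eqvGen_to_rtg h
  induction h' with
  | refl => exact hm
  | tail _ h2 _ => obtain ⟨A, hA, _, hx⟩ := h2; exact mem_ground.mpr ⟨A, hA, hx⟩

lemma mem_classFn_self {π : Finset (Finset ℕ)} {m : ℕ} (hm : m ∈ π.sup id) :
    m ∈ classFn π m := mem_classFn.mpr ⟨hm, Relation.EqvGen.refl m⟩

lemma classFn_eq_of_mem {π : Finset (Finset ℕ)} {m x : ℕ} (h : x ∈ classFn π m) :
    classFn π x = classFn π m := by
  rw [mem_classFn] at h
  ext y
  rw [mem_classFn, mem_classFn]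
  constructor
  · rintro ⟨hy, he⟩; exact ⟨hy, h.2.trans _ _ _ he⟩
  · rintro ⟨hy, he⟩; exact ⟨hy, (h.2.symm _ _).trans _ _ _ he⟩

lemma block_subset_classFn {π : Finset (Finset ℕ)} {A : Finset ℕ} (hA : A ∈ π) {a : ℕ}
    (ha : a ∈ A) : A ⊆ classFn π a := by
  intro x hx
  exact mem_classFn.mpr ⟨mem_ground.mpr ⟨A, hA, hx⟩, Relation.EqvGen.rel _ _ ⟨A, hA, ha, hx⟩⟩

lemma ground_eq {n : ℕ} {π : Finset (Finset ℕ)} (hπ : IsNCL n π) :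
    π.sup id = Finset.Icc 1 n := by
  ext m
  rw [mem_ground]
  constructor
  · rintro ⟨A, hA, hm⟩; exact hπ.1.2.1 A hA hm
  · intro hm; exact hπ.1.2.2.1 m hm

lemma genPart_partition {n : ℕ} {π : Finset (Finset ℕ)} (hπ : IsNCL n π) :
    IsPartitionOfSet (Finset.Icc 1 n) (genPart π) := by
  rw [genPart_def]
  refine ⟨?_, ?_, ?_, ?_⟩
  · intro V hV
    obtain ⟨m, hm, rfl⟩ := Finset.mem_image.mp hV
    exact ⟨m, mem_classFn_self hm⟩
  · intro V hV
    obtain ⟨m, hm, rfl⟩ := Finset.mem_image.mp hV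
    rw [← ground_eq hπ]
    intro x hx
    exact (mem_classFn.mp hx).1
  · intro m hm
    rw [← ground_eq hπ] at hm
    exact ⟨classFn π m, Finset.mem_image_of_mem _ hm, mem_classFn_self hm⟩
  · intro V hV W hW hVW
    obtain ⟨m1, hm1, rfl⟩ := Finset.mem_image.mp hV
    obtain ⟨m2, hm2, rfl⟩ := Finset.mem_image.mp hW
    by_contra hne
    obtain ⟨z, hz⟩ := Finset.nonempty_iff_ne_empty.mpr hne
    rw [Finset.mem_inter] at hz
    exact hVW ((classFn_eq_of_mem hz.1).symm.trans (classFn_eq_of_mem hz.2))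

/-- Lemma L : points connected to z stay strictly inside the gap (p,q) of a block A₀. -/
lemma lemmaL {n : ℕ} {π : Finset (Finset ℕ)} (hπ : IsNCL n π) {A₀ : Finset ℕ} {p q : ℕ}
    (hA₀ : A₀ ∈ π) (hp : p ∈ A₀) (hq : q ∈ A₀) {z w : ℕ}
    (h : Relation.ReflTransGen (LRel π) z w) :
    ¬ Relation.EqvGen (LRel π) z p → p < z → z < q → p < w ∧ w < q := by
  refine Relation.ReflTransGen.head_induction_on h (fun _ h2 h3 => ⟨h2, h3⟩) ?_
  intro a c hac hcb ih hnp hpa haq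
  obtain ⟨B, hB, haB, hcB⟩ := hac
  have haA : a ∉ A₀ := fun h =>
    hnp (Relation.EqvGen.rel _ _ ⟨A₀, hA₀, h, hp⟩)
  have hdisj : ∀ u, u ∈ B → u ∉ A₀ := by
    intro u hu huA
    exact hnp ((Relation.EqvGen.rel _ _ ⟨B, hB, haB, hu⟩).trans _ _ _
      (Relation.EqvGen.rel _ _ ⟨A₀, hA₀, huA, hp⟩))
  have hBne : B ≠ A₀ := fun h => haA (h ▸ haB)
  have hcp : c ≠ p := fun h => hdisj c hcB (h ▸ hp)
  have hcq : c ≠ q := fun h => hdisj c hcB (h ▸ hq)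
  have hpc : p < c ∧ c < q := by
    rcases lt_trichotomy c p with h | h | h
    · exact absurd ⟨B, hB, A₀, hA₀, hBne, c, hcB, p, hp, a, haB, q, hq, h, hpa, haq⟩ hπ.2
    · exact absurd h hcp
    · rcases lt_trichotomy c q with h' | h' | h'
      · exact ⟨h, h'⟩
      · exact absurd h' hcq
      · exact absurd ⟨A₀, hA₀, B, hB, hBne.symm, p, hp, a, haB, q, hq, c, hcB, hpa, haq, h'⟩
          hπ.2
  refine ih ?_ hpc.1 hpc.2
  intro hcp'
  exact hnp ((Relation.EqvGen.rel _ _ ⟨B, hB, haB, hcB⟩).trans _ _ _ hcp')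

/-- straddle lemma -/
lemma straddle {n : ℕ} {π : Finset (Finset ℕ)} (hπ : IsNCL n π) {a c : ℕ}
    (h : Relation.ReflTransGen (LRel π) a c) :
    ∀ b, a < b → b < c → ¬ Relation.EqvGen (LRel π) a b →
      ∃ A ∈ π, ∃ p ∈ A, ∃ q ∈ A, p < b ∧ b < q ∧ Relation.EqvGen (LRel π) p c := by
  refine Relation.ReflTransGen.head_induction_on h (fun b h1 h2 _ => absurd (h1.trans h2) (lt_irrefl _)) ?_
  intro a' c' hac' hrest ih b hab hbc hnab
  obtain ⟨A₁, hA₁, haA, hcA⟩ := hac'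
  have hbA : b ∉ A₁ := fun h => hnab (Relation.EqvGen.rel _ _ ⟨A₁, hA₁, haA, h⟩)
  have hbc' : c' ≠ b := fun h => hbA (h ▸ hcA)
  rcases lt_trichotomy b c' with h | h | h
  · exact ⟨A₁, hA₁, a', haA, c', hcA, hab, h,
      rtg_to_eqvGen (hrest.head ⟨A₁, hA₁, haA, hcA⟩)⟩
  · exact absurd h.symm hbc'
  · refine ih b h hbc ?_
    intro hcb
    exact hnab ((Relation.EqvGen.rel _ _ ⟨A₁, hA₁, haA, hcA⟩).trans _ _ _ hcb)

lemma genPart_nc {n : ℕ} {π : Finset (Finset ℕ)} (hπ : IsNCL n π) :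
    ¬ IsCrossing (genPart π) := by
  rintro ⟨V, hV, W, hW, hVW, a, haV, b, hbW, c, hcV, d, hdW, h1, h2, h3⟩
  rw [genPart_def] at hV hW
  obtain ⟨m1, hm1, rfl⟩ := Finset.mem_image.mp hV
  obtain ⟨m2, hm2, rfl⟩ := Finset.mem_image.mp hW
  have hca : classFn π a = classFn π m1 := classFn_eq_of_mem haV
  have hcc : classFn π c = classFn π m1 := classFn_eq_of_mem hcV
  have hcb : classFn π b = classFn π m2 := classFn_eq_of_mem hbW
  have hcd : classFn π d = classFn π m2 := classFn_eq_of_mem hdW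
  have hgb : b ∈ π.sup id := (mem_classFn.mp hbW).1
  have hgc : c ∈ π.sup id := (mem_classFn.mp hcV).1
  have hac : Relation.EqvGen (LRel π) a c :=
    ((mem_classFn.mp haV).2.symm _ _).trans _ _ _ (mem_classFn.mp hcV).2
  have hbd : Relation.EqvGen (LRel π) b d :=
    ((mem_classFn.mp hbW).2.symm _ _).trans _ _ _ (mem_classFn.mp hdW).2
  have hnab : ¬ Relation.EqvGen (LRel π) a b := fun h =>
    hVW (by rw [← hca, ← hcb]
            exact (classFn_eq_of_mem (mem_classFn.mpr ⟨hgb, h⟩)).symm)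
  have hnbc : ¬ Relation.EqvGen (LRel π) b c := fun h =>
    hVW (by rw [← hcc, ← hcb]
            exact classFn_eq_of_mem (mem_classFn.mpr ⟨hgc, h⟩))
  obtain ⟨A₁, hA₁, p, hpA, q, hqA, hpb, hbq, hpc⟩ :=
    straddle hπ (eqvGen_to_rtg hac) b h1 h2 hnab
  obtain ⟨A₂, hA₂, p', hpA', q', hqA', hpc', hcq', hpd'⟩ :=
    straddle hπ (eqvGen_to_rtg hbd) c h2 h3 hnbc
  have hbp' : Relation.ReflTransGen (LRel π) b p' :=
    eqvGen_to_rtg (hbd.trans _ _ _ (hpd'.symm _ _))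
  have hnbp : ¬ Relation.EqvGen (LRel π) b p := fun h => hnbc (h.trans _ _ _ hpc)
  have hL1 := lemmaL hπ hA₁ hpA hqA hbp' hnbp hpb hbq
  have hcp : Relation.ReflTransGen (LRel π) c p := eqvGen_to_rtg (hpc.symm _ _)
  have hncp : ¬ Relation.EqvGen (LRel π) c p' := fun h =>
    hnbc (((hbd.trans _ _ _ (hpd'.symm _ _)).trans _ _ _ (h.symm _ _)))
  have hL2 := lemmaL hπ hA₂ hpA' hqA' hcp hncp hpc' hcq'
  omega
lemma inter_cases {n : ℕ} {π : Finset (Finset ℕ)} (hπ : IsNCL n π) {A B : Finset ℕ}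
    (hA : A ∈ π) (hB : B ∈ π) (hAB : A ≠ B) {m : ℕ} (hmA : m ∈ A) (hmB : m ∈ B) :
    (m = fmin A ∨ m = fmin B) ∧ fmin A ≠ fmin B ∧ 2 ≤ A.card ∧ 2 ≤ B.card := by
  rcases hπ.1.2.2.2 A hA B hB hAB with h | ⟨h1, h2, h3, h4, h5⟩
  · exact absurd (h ▸ Finset.mem_inter.mpr ⟨hmA, hmB⟩) (Finset.notMem_empty m)
  · exact ⟨h5 m (Finset.mem_inter.mpr ⟨hmA, hmB⟩), h4, h1, h2⟩

lemma coverCount_le_two {n : ℕ} {π : Finset (Finset ℕ)} (hπ : IsNCL n π) (m : ℕ) :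
    coverCount π m ≤ 2 := by
  by_contra hc
  push_neg at hc
  obtain ⟨A, hA, B, hB, C, hC, hAB, hAC, hBC⟩ := Finset.two_lt_card.mp hc
  rw [Finset.mem_filter] at hA hB hC
  have h1 := inter_cases hπ hA.1 hB.1 hAB hA.2 hB.2
  have h2 := inter_cases hπ hA.1 hC.1 hAC hA.2 hC.2
  have h3 := inter_cases hπ hB.1 hC.1 hBC hB.2 hC.2
  omega

lemma coverCount_pos {π : Finset (Finset ℕ)} {A : Finset ℕ} {m : ℕ} (hA : A ∈ π)
    (hm : m ∈ A) : 1 ≤ coverCount π m :=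
  Finset.card_pos.mpr ⟨A, Finset.mem_filter.mpr ⟨hA, hm⟩⟩

lemma singly_unique {π : Finset (Finset ℕ)} {A B : Finset ℕ} {m : ℕ}
    (hs : SinglyCovered π m) (hA : A ∈ π) (hmA : m ∈ A) (hB : B ∈ π) (hmB : m ∈ B) :
    B = A := by
  by_contra hne
  have : 1 < coverCount π m := Finset.one_lt_card.mpr
    ⟨A, Finset.mem_filter.mpr ⟨hA, hmA⟩, B, Finset.mem_filter.mpr ⟨hB, hmB⟩, fun h => hne h.symm⟩
  rw [SinglyCovered] at hs
  omega

lemma exists_other_block {n : ℕ} {π : Finset (Finset ℕ)} (hπ : IsNCL n π) {A : Finset ℕ}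
    {m : ℕ} (hA : A ∈ π) (hm : m ∈ A) (hns : ¬ SinglyCovered π m) :
    ∃ B ∈ π, B ≠ A ∧ m ∈ B := by
  have h1 := coverCount_pos hA hm
  have h2 := coverCount_le_two hπ m
  have h3 : 1 < coverCount π m := by
    rw [SinglyCovered] at hns; omega
  obtain ⟨B, hB, hBA⟩ := Finset.exists_mem_ne h3 A
  rw [Finset.mem_filter] at hB
  exact ⟨B, hB.1, hBA, hB.2⟩

/-- the unlinked block -/
noncomputable def ublock (π : Finset (Finset ℕ)) (A : Finset ℕ) : Finset ℕ :=
  if SinglyCovered π (fmin A) then A else A.erase (fmin A)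

lemma unlink_def (π : Finset (Finset ℕ)) : unlink π = π.image (ublock π) := rfl

lemma ublock_subset {π : Finset (Finset ℕ)} {A : Finset ℕ} : ublock π A ⊆ A := by
  unfold ublock; split
  · exact subset_rfl
  · exact Finset.erase_subset _ _

lemma mem_ublock_of_ne {π : Finset (Finset ℕ)} {A : Finset ℕ} {m : ℕ} (hm : m ∈ A)
    (hne : m ≠ fmin A) : m ∈ ublock π A := by
  unfold ublock; split
  · exact hm
  · exact Finset.mem_erase.mpr ⟨hne, hm⟩

lemma min_mem_ublock {π : Finset (Finset ℕ)} {A : Finset ℕ}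
    (hs : SinglyCovered π (fmin A)) : ublock π A = A := if_pos hs

lemma min_not_mem_ublock {π : Finset (Finset ℕ)} {A : Finset ℕ}
    (hs : ¬ SinglyCovered π (fmin A)) : fmin A ∉ ublock π A := by
  unfold ublock
  rw [if_neg hs]
  exact Finset.notMem_erase _ _

lemma ublock_nonempty {n : ℕ} {π : Finset (Finset ℕ)} (hπ : IsNCL n π) {A : Finset ℕ}
    (hA : A ∈ π) : (ublock π A).Nonempty := by
  have hAne : A.Nonempty := hπ.1.1 A hA
  unfold ublock; split
  · exact hAne
  · rename_i hns
    obtain ⟨B, hB, hBA, hmB⟩ := exists_other_block hπ hA (fmin_mem hAne) hns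
    have h2 : 2 ≤ A.card := (inter_cases hπ hA hB hBA.symm (fmin_mem hAne) hmB).2.2.1
    rw [← Finset.card_pos, Finset.card_erase_of_mem (fmin_mem hAne)]
    omega

lemma ublock_disj {n : ℕ} {π : Finset (Finset ℕ)} (hπ : IsNCL n π) {A B : Finset ℕ}
    (hA : A ∈ π) (hB : B ∈ π) (hAB : A ≠ B) {y : ℕ} (hyA : y ∈ ublock π A) :
    y ∉ ublock π B := by
  intro hyB
  have hymA : y ∈ A := ublock_subset hyA
  have hymB : y ∈ B := ublock_subset hyB
  obtain ⟨hor, hne, _, _⟩ := inter_cases hπ hA hB hAB hymA hymB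
  rcases hor with h | h
  · have hns : ¬ SinglyCovered π (fmin A) := by
      intro hs
      exact hAB (singly_unique hs hA (h ▸ hymA) hB (h ▸ hymB)).symm
    exact (h ▸ min_not_mem_ublock hns) hyA
  · have hns : ¬ SinglyCovered π (fmin B) := by
      intro hs
      exact hAB (singly_unique hs hB (h ▸ hymB) hA (h ▸ hymA))
    exact (h ▸ min_not_mem_ublock hns) hyB

lemma ublock_ne {n : ℕ} {π : Finset (Finset ℕ)} (hπ : IsNCL n π) {A B : Finset ℕ}
    (hA : A ∈ π) (hB : B ∈ π) (hAB : A ≠ B) : ublock π A ≠ ublock π B := by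
  intro h
  obtain ⟨y, hy⟩ := ublock_nonempty hπ hA
  exact ublock_disj hπ hA hB hAB hy (h ▸ hy)

lemma unlink_partition {n : ℕ} {π : Finset (Finset ℕ)} (hπ : IsNCL n π) :
    IsPartitionOfSet (Finset.Icc 1 n) (unlink π) := by
  rw [unlink_def]
  refine ⟨?_, ?_, ?_, ?_⟩
  · intro V hV
    obtain ⟨A, hA, rfl⟩ := Finset.mem_image.mp hV
    exact ublock_nonempty hπ hA
  · intro V hV
    obtain ⟨A, hA, rfl⟩ := Finset.mem_image.mp hV
    exact fun x hx => hπ.1.2.1 A hA (ublock_subset hx)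
  · intro m hm
    obtain ⟨A, hA, hmA⟩ := hπ.1.2.2.1 m hm
    by_cases he : m = fmin A
    · by_cases hs : SinglyCovered π (fmin A)
      · exact ⟨ublock π A, Finset.mem_image_of_mem _ hA, by rw [min_mem_ublock hs, ← he] at *; exact hmA⟩
      · obtain ⟨B, hB, hBA, hmB⟩ := exists_other_block hπ hA hmA (he ▸ hs)
        have hor := inter_cases hπ hA hB hBA.symm hmA hmB
        have hmB' : m ≠ fmin B := by
          intro h
          exact hor.2.1 (he.symm.trans h)
        exact ⟨ublock π B, Finset.mem_image_of_mem _ hB, mem_ublock_of_ne hmB hmB'⟩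
    · exact ⟨ublock π A, Finset.mem_image_of_mem _ hA, mem_ublock_of_ne hmA he⟩
  · intro V hV W hW hVW
    obtain ⟨A, hA, rfl⟩ := Finset.mem_image.mp hV
    obtain ⟨B, hB, rfl⟩ := Finset.mem_image.mp hW
    have hAB : A ≠ B := fun h => hVW (h ▸ rfl)
    rw [Finset.eq_empty_iff_forall_notMem]
    intro y hy
    rw [Finset.mem_inter] at hy
    exact ublock_disj hπ hA hB hAB hy.1 hy.2

lemma unlink_nc {n : ℕ} {π : Finset (Finset ℕ)} (hπ : IsNCL n π) :
    ¬ IsCrossing (unlink π) := by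
  rintro ⟨V, hV, W, hW, hVW, a, haV, b, hbW, c, hcV, d, hdW, h1, h2, h3⟩
  rw [unlink_def] at hV hW
  obtain ⟨A, hA, rfl⟩ := Finset.mem_image.mp hV
  obtain ⟨B, hB, rfl⟩ := Finset.mem_image.mp hW
  have hAB : A ≠ B := fun h => hVW (h ▸ rfl)
  exact hπ.2 ⟨A, hA, B, hB, hAB, a, ublock_subset haV, b, ublock_subset hbW,
    c, ublock_subset hcV, d, ublock_subset hdW, h1, h2, h3⟩

lemma unlink_refines {n : ℕ} {π : Finset (Finset ℕ)} (hπ : IsNCL n π) :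
    ∀ V ∈ unlink π, ∃ B ∈ genPart π, V ⊆ B := by
  intro V hV
  rw [unlink_def] at hV
  obtain ⟨A, hA, rfl⟩ := Finset.mem_image.mp hV
  have hAne : A.Nonempty := hπ.1.1 A hA
  have hg : fmin A ∈ π.sup id := mem_ground.mpr ⟨A, hA, fmin_mem hAne⟩
  refine ⟨classFn π (fmin A), ?_, ?_⟩
  · rw [genPart_def]; exact Finset.mem_image_of_mem _ hg
  · exact fun x hx => block_subset_classFn hA (fmin_mem hAne) (ublock_subset hx)
lemma permOfInv_eq {F : Finset ℕ} {α : Finset (Finset ℕ)} (hpart : IsPartitionOfSet F α)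
    {V : Finset ℕ} {m : ℕ} (hV : V ∈ α) (hm : m ∈ V) :
    permOfInv α m = prevInBlock V m := by
  unfold permOfInv
  rw [blockOf_eq hpart hV hm, if_pos hm]

lemma permOf_eq {F : Finset ℕ} {α : Finset (Finset ℕ)} (hpart : IsPartitionOfSet F α)
    {V : Finset ℕ} {m : ℕ} (hV : V ∈ α) (hm : m ∈ V) :
    permOf α m = nextInBlock V m := by
  unfold permOf
  rw [blockOf_eq hpart hV hm, if_pos hm]

lemma permOfInv_mem {F : Finset ℕ} {α : Finset (Finset ℕ)} (hpart : IsPartitionOfSet F α)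
    {V : Finset ℕ} {m : ℕ} (hV : V ∈ α) (hm : m ∈ V) : permOfInv α m ∈ V := by
  rw [permOfInv_eq hpart hV hm]; exact prev_mem hm

lemma permOf_mem {F : Finset ℕ} {α : Finset (Finset ℕ)} (hpart : IsPartitionOfSet F α)
    {V : Finset ℕ} {m : ℕ} (hV : V ∈ α) (hm : m ∈ V) : permOf α m ∈ V := by
  rw [permOf_eq hpart hV hm]; exact next_mem hm

lemma permOf_permOfInv {F : Finset ℕ} {α : Finset (Finset ℕ)} (hpart : IsPartitionOfSet F α)
    {V : Finset ℕ} {m : ℕ} (hV : V ∈ α) (hm : m ∈ V) :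
    permOf α (permOfInv α m) = m := by
  rw [permOfInv_eq hpart hV hm, permOf_eq hpart hV (prev_mem hm), next_prev hm]

lemma permOfInv_permOf {F : Finset ℕ} {α : Finset (Finset ℕ)} (hpart : IsPartitionOfSet F α)
    {V : Finset ℕ} {m : ℕ} (hV : V ∈ α) (hm : m ∈ V) :
    permOfInv α (permOf α m) = m := by
  rw [permOf_eq hpart hV hm, permOfInv_eq hpart hV (next_mem hm), prev_next hm]

lemma permOfInv_inj {F : Finset ℕ} {α : Finset (Finset ℕ)} (hpart : IsPartitionOfSet F α)
    {x y : ℕ} (hx : x ∈ F) (hy : y ∈ F) (h : permOfInv α x = permOfInv α y) : x = y := by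
  obtain ⟨Vx, hVx, hxV⟩ := hpart.2.2.1 x hx
  obtain ⟨Vy, hVy, hyV⟩ := hpart.2.2.1 y hy
  calc x = permOf α (permOfInv α x) := (permOf_permOfInv hpart hVx hxV).symm
    _ = permOf α (permOfInv α y) := by rw [h]
    _ = y := permOf_permOfInv hpart hVy hyV

lemma cycUnlink_def (π : Finset (Finset ℕ)) :
    cycUnlink π = mapPart (permOfInv (genPart π)) (unlink π) := rfl

lemma mem_mapPart {τ : ℕ → ℕ} {α : Finset (Finset ℕ)} {V : Finset ℕ} :
    V ∈ mapPart τ α ↔ ∃ W ∈ α, W.image τ = V := by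
  unfold mapPart
  simp [Finset.mem_image]

/-- The big-block of an unlink block. -/
lemma unlink_block_spec {n : ℕ} {π : Finset (Finset ℕ)} (hπ : IsNCL n π) {V : Finset ℕ}
    (hV : V ∈ unlink π) : ∃ B ∈ genPart π, V ⊆ B ∧
      (∀ x ∈ V, permOfInv (genPart π) x = prevInBlock B x) := by
  obtain ⟨B, hB, hVB⟩ := unlink_refines hπ V hV
  exact ⟨B, hB, hVB, fun x hx => permOfInv_eq (genPart_partition hπ) hB (hVB hx)⟩

lemma cycUnlink_partition {n : ℕ} {π : Finset (Finset ℕ)} (hπ : IsNCL n π) :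
    IsPartitionOfSet (Finset.Icc 1 n) (cycUnlink π) := by
  have hβ := genPart_partition hπ
  have hu := unlink_partition hπ
  rw [cycUnlink_def]
  have hmap : ∀ m ∈ Finset.Icc 1 n, permOfInv (genPart π) m ∈ Finset.Icc 1 n := by
    intro m hm
    obtain ⟨W, hW, hmW⟩ := hβ.2.2.1 m hm
    exact hβ.2.1 W hW (permOfInv_mem hβ hW hmW)
  refine ⟨?_, ?_, ?_, ?_⟩
  · intro V hV
    obtain ⟨W, hW, rfl⟩ := mem_mapPart.mp hV
    exact ((hu.1 W hW).image _)
  · intro V hV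
    obtain ⟨W, hW, rfl⟩ := mem_mapPart.mp hV
    intro x hx
    obtain ⟨y, hy, rfl⟩ := Finset.mem_image.mp hx
    exact hmap y (hu.2.1 W hW hy)
  · intro m hm
    obtain ⟨W, hW, hmW⟩ := hβ.2.2.1 m hm
    have hm' : permOf (genPart π) m ∈ Finset.Icc 1 n :=
      hβ.2.1 W hW (permOf_mem hβ hW hmW)
    obtain ⟨V, hV, hmV⟩ := hu.2.2.1 _ hm'
    refine ⟨V.image (permOfInv (genPart π)), mem_mapPart.mpr ⟨V, hV, rfl⟩, ?_⟩
    rw [Finset.mem_image]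
    exact ⟨_, hmV, permOfInv_permOf hβ hW hmW⟩
  · intro V hV W hW hVW
    obtain ⟨V₁, hV₁, rfl⟩ := mem_mapPart.mp hV
    obtain ⟨W₁, hW₁, rfl⟩ := mem_mapPart.mp hW
    have hne : V₁ ≠ W₁ := fun h => hVW (h ▸ rfl)
    rw [Finset.eq_empty_iff_forall_notMem]
    intro y hy
    rw [Finset.mem_inter] at hy
    obtain ⟨y1, hy1, hy1e⟩ := Finset.mem_image.mp hy.1
    obtain ⟨y2, hy2, hy2e⟩ := Finset.mem_image.mp hy.2
    have h12 : y1 = y2 := permOfInv_inj hβ (hu.2.1 V₁ hV₁ hy1) (hu.2.1 W₁ hW₁ hy2)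
      (hy1e.trans hy2e.symm)
    have : y1 ∈ V₁ ∩ W₁ := Finset.mem_inter.mpr ⟨hy1, h12 ▸ hy2⟩
    rw [hu.2.2.2 V₁ hV₁ W₁ hW₁ hne] at this
    exact absurd this (Finset.notMem_empty _)

lemma cycUnlink_nc {n : ℕ} {π : Finset (Finset ℕ)} (hπ : IsNCL n π) :
    ¬ IsCrossing (cycUnlink π) := by
  have hβ := genPart_partition hπ
  have hu := unlink_partition hπ
  rw [cycUnlink_def]
  rintro ⟨V, hV, W, hW, hVW, a, haV, b, hbW, c, hcV, d, hdW, h1, h2, h3⟩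
  obtain ⟨V₁, hV₁, rfl⟩ := mem_mapPart.mp hV
  obtain ⟨W₁, hW₁, rfl⟩ := mem_mapPart.mp hW
  have hne : V₁ ≠ W₁ := fun h => hVW (h ▸ rfl)
  obtain ⟨BV, hBV, hVB, hVτ⟩ := unlink_block_spec hπ hV₁
  obtain ⟨BW, hBW, hWB, hWτ⟩ := unlink_block_spec hπ hW₁
  -- image points lie in the same big blocks, with next giving back the preimage
  have hV' : ∀ x ∈ V₁.image (permOfInv (genPart π)),
      x ∈ BV ∧ nextInBlock BV x ∈ V₁ := by
    intro x hx
    obtain ⟨y, hy, rfl⟩ := Finset.mem_image.mp hx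
    rw [hVτ y hy]
    exact ⟨prev_mem (hVB hy), by rw [next_prev (hVB hy)]; exact hy⟩
  have hW' : ∀ x ∈ W₁.image (permOfInv (genPart π)),
      x ∈ BW ∧ nextInBlock BW x ∈ W₁ := by
    intro x hx
    obtain ⟨y, hy, rfl⟩ := Finset.mem_image.mp hx
    rw [hWτ y hy]
    exact ⟨prev_mem (hWB hy), by rw [next_prev (hWB hy)]; exact hy⟩
  obtain ⟨haB, hsa⟩ := hV' a haV
  obtain ⟨hcB, hsc⟩ := hV' c hcV
  obtain ⟨hbB, hsb⟩ := hW' b hbW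
  obtain ⟨hdB, hsd⟩ := hW' d hdW
  by_cases hBB : BV = BW
  · -- the rotation argument within a single block B
    subst hBB
    generalize hBgen : BV = B at *
    have hmax := le_fmax hdB
    have hane : a ≠ fmax B := by omega
    have hbne : b ≠ fmax B := by omega
    have hcne : c ≠ fmax B := by omega
    obtain ⟨_, ha2, ha3⟩ := next_spec haB hane
    obtain ⟨_, hb2, hb3⟩ := next_spec hbB hbne
    obtain ⟨_, hc2, hc3⟩ := next_spec hcB hcne
    have hab : nextInBlock B a ≤ b := ha3 b hbB h1
    have hbc : nextInBlock B b ≤ c := hb3 c hcB h2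
    have hcd : nextInBlock B c ≤ d := hc3 d hdB h3
    by_cases hdne : d = fmax B
    · -- σ d = fmin B
      have hσd : nextInBlock B d = fmin B := by rw [hdne, next_fmax]
      have hfa : fmin B ≤ a := fmin_le haB
      refine unlink_nc hπ ⟨W₁, hW₁, V₁, hV₁, hne.symm, nextInBlock B d, hsd, nextInBlock B a, hsa, nextInBlock B b, hsb,
        nextInBlock B c, hsc, ?_, ?_, ?_⟩ <;> omega
    · obtain ⟨_, hd2, _⟩ := next_spec hdB hdne
      refine unlink_nc hπ ⟨V₁, hV₁, W₁, hW₁, hne, nextInBlock B a, hsa, nextInBlock B b, hsb, nextInBlock B c, hsc,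
        nextInBlock B d, hsd, ?_, ?_, ?_⟩ <;> omega
  · exact genPart_nc hπ ⟨BV, hBV, BW, hBW, hBB, a, haB, b, hbB, c, hcB, d, hdB, h1, h2, h3⟩
lemma singleton_class {π : Finset (Finset ℕ)} {m : ℕ}
    (hone : ∀ B ∈ π, m ∈ B → B = {m}) :
    ∀ x, Relation.ReflTransGen (LRel π) m x → x = m := by
  intro x h
  induction h with
  | refl => rfl
  | tail h1 h2 ih =>
    obtain ⟨B, hB, hy, hx⟩ := h2
    rw [ih] at hy
    have := hone B hB hy
    rw [this, Finset.mem_singleton] at hx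
    exact hx

/-- the trap lemma: a chain starting strictly inside the gap (m,q) of A can never reach m -/
lemma trap {n : ℕ} {π : Finset (Finset ℕ)} (hπ : IsNCL n π) {A : Finset ℕ} {m q : ℕ}
    (hA : A ∈ π) (hmA : m ∈ A) (hqA : q ∈ A)
    (hsingle : ∀ B ∈ π, m ∈ B → B = A)
    (hWlow : ∀ x, Relation.EqvGen (LRel π) m x → m ≤ x)
    (hqmin : ∀ y ∈ A, m < y → q ≤ y)
    {x y : ℕ} (h : Relation.ReflTransGen (LRel π) x y) :
    x ∉ A → m < x → x < q → Relation.EqvGen (LRel π) m x → (y ∉ A ∧ m < y ∧ y < q) := by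
  refine Relation.ReflTransGen.head_induction_on h (fun h1 h2 h3 _ => ⟨h1, h2, h3⟩) ?_
  intro a c hac hcy ih hnA hma haq hEma
  obtain ⟨B, hB, haB, hcB⟩ := hac
  have hBA : B ≠ A := fun h => hnA (h ▸ haB)
  have hdisjBA : ∀ u ∈ B, u ∉ A := by
    intro u huB huA
    obtain ⟨hor, hneq, _, _⟩ := inter_cases hπ hB hA hBA huB huA
    have hfBa : fmin B ≤ a := fmin_le haB
    have hEmfB : Relation.EqvGen (LRel π) m (fmin B) :=
      hEma.trans _ _ _ (Relation.EqvGen.rel _ _ ⟨B, hB, haB, fmin_mem ⟨a, haB⟩⟩)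
    have hmfB : m ≤ fmin B := hWlow _ hEmfB
    rcases hor with h | h
    · -- u = fmin B and u ∈ A
      rcases eq_or_lt_of_le hmfB with h' | h'
      · exact hBA (hsingle B hB (h' ▸ fmin_mem ⟨a, haB⟩))
      · have := hqmin (fmin B) (h ▸ huA) h'
        omega
    · -- u = fmin A = m ∈ B
      have hfAm : fmin A = m := le_antisymm (fmin_le hmA)
        (hWlow _ (Relation.EqvGen.rel _ _ ⟨A, hA, hmA, fmin_mem ⟨m, hmA⟩⟩))
      exact hBA (hsingle B hB (hfAm ▸ h ▸ huB))
  have hcA : c ∉ A := hdisjBA c hcB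
  have hEmc : Relation.EqvGen (LRel π) m c :=
    hEma.trans _ _ _ (Relation.EqvGen.rel _ _ ⟨B, hB, haB, hcB⟩)
  have hmc' : m ≤ c := hWlow c hEmc
  have hcm : c ≠ m := fun h => hcA (h ▸ hmA)
  have hcq : c ≠ q := fun h => hcA (h ▸ hqA)
  have hcltq : c < q := by
    by_contra hge
    push_neg at hge
    have hqc : q < c := by omega
    exact hπ.2 ⟨A, hA, B, hB, hBA.symm, m, hmA, a, haB, q, hqA, c, hcB, hma, haq, hqc⟩
  exact ih hcA (by omega) hcltq hEmc

/-- for each block W of genPart, some block of cycUnlink contains both min W and max W -/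
lemma min_max_covered {n : ℕ} {π : Finset (Finset ℕ)} (hπ : IsNCL n π) {W : Finset ℕ}
    (hW : W ∈ genPart π) : ∃ V ∈ cycUnlink π, fmin W ∈ V ∧ fmax W ∈ V := by
  have hβ := genPart_partition hπ
  have hWne : W.Nonempty := hβ.1 W hW
  obtain ⟨m, hm⟩ : ∃ m, fmin W = m := ⟨_, rfl⟩
  have hmW : m ∈ W := hm ▸ fmin_mem hWne
  have hmF : m ∈ Finset.Icc 1 n := hβ.2.1 W hW hmW
  -- W is the class of m
  obtain ⟨m0, hm0, hWeq⟩ := Finset.mem_image.mp (by rw [genPart_def] at hW; exact hW)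
  have hWclass : classFn π m = W := by
    rw [← hWeq] at hmW ⊢
    exact classFn_eq_of_mem hmW
  have hmg : m ∈ π.sup id := by rw [ground_eq hπ]; exact hmF
  have hWlow : ∀ x, Relation.EqvGen (LRel π) m x → m ≤ x := by
    intro x hx
    have : x ∈ classFn π m := mem_classFn.mpr ⟨eqv_mem_ground hmg hx, hx⟩
    rw [hWclass] at this
    exact hm ▸ fmin_le this
  obtain ⟨A, hA, hmA⟩ := hπ.1.2.2.1 m hmF
  have hAW : A ⊆ W := by rw [← hWclass]; exact block_subset_classFn hA hmA
  have hfA : fmin A = m := le_antisymm (fmin_le hmA) (hm ▸ fmin_le (hAW (fmin_mem ⟨m, hmA⟩)))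
  have hsingle : ∀ B ∈ π, m ∈ B → B = A := by
    intro B hB hmB
    by_contra hne
    obtain ⟨_, hneq, _, _⟩ := inter_cases hπ hB hA hne hmB hmA
    have hfB : fmin B = m := le_antisymm (fmin_le hmB)
      (hm ▸ fmin_le (block_subset_classFn hB hmB (fmin_mem ⟨m, hmB⟩) |> (hWclass ▸ ·)))
    exact hneq (hfB.trans hfA.symm)
  have hSC : SinglyCovered π m := by
    have hfil : π.filter (fun C => m ∈ C) = {A} := by
      apply Finset.eq_singleton_iff_unique_mem.mpr
      refine ⟨Finset.mem_filter.mpr ⟨hA, hmA⟩, fun C hC => ?_⟩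
      rw [Finset.mem_filter] at hC
      exact hsingle C hC.1 hC.2
    unfold SinglyCovered coverCount
    rw [hfil, Finset.card_singleton]
  have huA : ublock π A = A := min_mem_ublock (by rw [hfA]; exact hSC)
  have hAin : A ∈ unlink π := by
    rw [unlink_def, Finset.mem_image]
    exact ⟨A, hA, huA⟩
  refine ⟨A.image (permOfInv (genPart π)), ?_, ?_, ?_⟩
  · rw [cycUnlink_def]
    exact mem_mapPart.mpr ⟨A, hAin, rfl⟩
  · -- fmin W ∈ image
    by_cases hmm : m = fmax W
    · refine Finset.mem_image.mpr ⟨m, hmA, ?_⟩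
      rw [permOfInv_eq hβ hW hmW, ← hm, prev_fmin]
      omega
    · -- main claim : m' = nextInBlock W m belongs to A
      obtain ⟨hm'W, hmm', hm'min⟩ := next_spec hmW hmm
      have hm'A : nextInBlock W m ∈ A := by
        by_contra hm'A
        -- first : m ≠ fmax A
        have hmfA : m ≠ fmax A := by
          intro hmax
          have hAone : A = {m} := by
            apply Finset.eq_singleton_iff_unique_mem.mpr
            refine ⟨hmA, fun x hx => ?_⟩
            have h1 := le_fmax hx
            have h2 := fmin_le hx
            omega
          have hone : ∀ B ∈ π, m ∈ B → B = {m} := fun B hB hmB =>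
            (hsingle B hB hmB).trans hAone
          have : nextInBlock W m = m := singleton_class hone _
            (eqvGen_to_rtg (by
              have : nextInBlock W m ∈ classFn π m := hWclass ▸ hm'W
              exact (mem_classFn.mp this).2))
          omega
        obtain ⟨hqA, hmq, hqmin⟩ := next_spec hmA hmfA
        have hm'q : nextInBlock W m < nextInBlock A m := by
          have h1 := hm'min _ (hAW hqA) hmq
          have h2 : nextInBlock W m ≠ nextInBlock A m := fun h => hm'A (h ▸ hqA)
          omega
        have hEmm' : Relation.EqvGen (LRel π) m (nextInBlock W m) := by
          have : nextInBlock W m ∈ classFn π m := hWclass ▸ hm'W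
          exact (mem_classFn.mp this).2
        have := trap hπ hA hmA hqA hsingle hWlow hqmin
          (eqvGen_to_rtg (hEmm'.symm _ _)) hm'A hmm' hm'q (hEmm'.symm _ _ |>.symm _ _)
        omega
      refine Finset.mem_image.mpr ⟨nextInBlock W m, hm'A, ?_⟩
      rw [permOfInv_eq hβ hW hm'W, prev_next hmW]
      exact hm.symm
  · -- fmax W ∈ image
    refine Finset.mem_image.mpr ⟨m, hmA, ?_⟩
    rw [permOfInv_eq hβ hW hmW, ← hm, prev_fmin]

/-- Let `π ∈ NCL(n)`. Then the cycled unlinking `π°` is in `NC(n)`,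
and `π° ≪ π̂`. -/
theorem stmt2 (n : ℕ) (π : Finset (Finset ℕ)) (hπ : IsNCL n π) :
    IsNCPartition n (cycUnlink π) ∧ LL (cycUnlink π) (genPart π) := by
  refine ⟨⟨cycUnlink_partition hπ, cycUnlink_nc hπ⟩, ?_, ?_⟩
  · intro V hV
    rw [cycUnlink_def] at hV
    obtain ⟨V₁, hV₁, rfl⟩ := mem_mapPart.mp hV
    obtain ⟨B, hB, hVB, hτ⟩ := unlink_block_spec hπ hV₁
    refine ⟨B, hB, fun x hx => ?_⟩
    obtain ⟨y, hy, rfl⟩ := Finset.mem_image.mp hx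
    rw [hτ y hy]
    exact prev_mem (hVB hy)
  · intro W hW
    exact min_max_covered hπ hW
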